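/- Let p be a prime with p ≡ 1 (mod 4) and let Γ = Paley(p)[K₂] be the graph with vertex set (ℤ/pℤ) × {0,1} in which (x,u) and (y,v) are adjacent if and only if x − y is a nonzero square in ℤ/pℤ, or x = y and u ≠ v. Then Γ is a Deza graph with parameters (2p, p, p−1, (p−1)/2). -/

import Mathlib

/-- The graph `Paley(p)[K₂]` on `(ZMod p) × Fin 2`: `(x,u)` and `(y,v)` are adjacent
iff `x - y` is a nonzero square, or `x = y` and `u ≠ v`. (Both directions of the
square condition are required so that the graph is well defined for every `p`;
when `p ≡ 1 (mod 4)` they are equivalent.) -/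
def paleyK2 (p : ℕ) : SimpleGraph (ZMod p × Fin 2) where
  Adj v u := (v.1 ≠ u.1 ∧ (∃ w : ZMod p, w ≠ 0 ∧ v.1 - u.1 = w ^ 2) ∧
      (∃ w : ZMod p, w ≠ 0 ∧ u.1 - v.1 = w ^ 2)) ∨ (v.1 = u.1 ∧ v.2 ≠ u.2)
  symm := by
    constructor
    rintro v u (⟨h1, h2, h3⟩ | ⟨h1, h2⟩)
    · exact Or.inl ⟨h1.symm, h3, h2⟩
    · exact Or.inr ⟨h1.symm, h2.symm⟩
  loopless := by
    constructor
    rintro v (⟨h, -, -⟩ | ⟨-, h⟩) <;> exact h rfl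

/-- `Γ` is a Deza graph with parameters `(n, k, b, a)`: it has `n` vertices, is
`k`-regular, and any pair of distinct vertices has either `a` or `b` common neighbors. -/
def IsDezaGraph {V : Type} (Γ : SimpleGraph V) (n k b a : ℕ) : Prop :=
  Nat.card V = n ∧ (∀ v, (Γ.neighborSet v).ncard = k) ∧
    ∀ u v : V, u ≠ v →
      (Γ.commonNeighbors u v).ncard = a ∨ (Γ.commonNeighbors u v).ncard = b

namespace PaleyDezaAux

open Finset

variable {p : ℕ} [Fact p.Prime]

lemma ringChar_ne_two' (hmod : p % 4 = 1) : ringChar (ZMod p) ≠ 2 := by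
  rw [ZMod.ringChar_zmod_n]; omega

lemma chi_neg (hmod : p % 4 = 1) (a : ZMod p) :
    quadraticChar (ZMod p) (-a) = quadraticChar (ZMod p) a := by
  have h1 : quadraticChar (ZMod p) (-1) = 1 := by
    rw [quadraticChar_neg_one (ringChar_ne_two' hmod), ZMod.card p,
      ZMod.χ₄_nat_one_mod_four hmod]
  rw [← neg_one_mul, map_mul, h1, one_mul]

lemma card_chi_one (hmod : p % 4 = 1) :
    2 * (univ.filter fun c : ZMod p => quadraticChar (ZMod p) c = 1).card = p - 1 := by
  classical
  set A := univ.filter fun c : ZMod p => quadraticChar (ZMod p) c = 1 with hA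
  set B := univ.filter fun c : ZMod p => quadraticChar (ZMod p) c = -1 with hB
  obtain ⟨b, hb⟩ := quadraticChar_exists_neg_one (ringChar_ne_two' hmod)
  have hb0 : b ≠ 0 := by
    intro h; rw [h, quadraticChar_zero] at hb; norm_num at hb
  have hcard : A.card = B.card := by
    apply Finset.card_nbij' (fun c => b * c) (fun c => b⁻¹ * c)
    · intro c hc
      simp only [hA, hB, Finset.mem_coe, mem_filter, mem_univ, true_and] at hc ⊢
      rw [map_mul, hb, hc]; ring
    · intro c hc
      simp only [hA, hB, Finset.mem_coe, mem_filter, mem_univ, true_and] at hc ⊢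
      have h2 : quadraticChar (ZMod p) b⁻¹ * quadraticChar (ZMod p) b = 1 := by
        rw [← map_mul, inv_mul_cancel₀ hb0, map_one]
      rw [hb] at h2
      have h3 : quadraticChar (ZMod p) b⁻¹ = -1 := by linarith
      rw [map_mul, h3, hc]; ring
    · intro c _; field_simp
    · intro c _; field_simp
  have hunion : (univ : Finset (ZMod p)).filter (fun c => ¬ quadraticChar (ZMod p) c = 1)
      = insert (0 : ZMod p) B := by
    ext c
    simp only [mem_filter, mem_univ, true_and, mem_insert, hB]
    constructor
    · intro h
      by_cases hc : c = 0
      · exact Or.inl hc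
      · exact Or.inr ((quadraticChar_eq_neg_one_iff_not_one hc).mpr h)
    · rintro (rfl | h)
      · simp [quadraticChar_zero]
      · rw [h]; norm_num
  have h0B : (0 : ZMod p) ∉ B := by
    simp [hB, quadraticChar_zero]
  have htot := Finset.card_filter_add_card_filter_not
    (s := (univ : Finset (ZMod p))) (p := fun c => quadraticChar (ZMod p) c = 1)
  rw [hunion, Finset.card_insert_of_notMem h0B, Finset.card_univ, ZMod.card, hcard] at htot
  have hp1 : 1 < p := (Fact.out : p.Prime).one_lt
  omega

lemma sum_chi_mul (hmod : p % 4 = 1) {c : ZMod p} (hc : c ≠ 0) :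
    ∑ z : ZMod p, quadraticChar (ZMod p) (z * (z + c)) = -1 := by
  classical
  have h2 := ringChar_ne_two' hmod
  have step1 : ∑ z : ZMod p, quadraticChar (ZMod p) (z * (z + c))
      = ∑ z ∈ univ.erase (0 : ZMod p), quadraticChar (ZMod p) (z * (z + c)) := by
    rw [eq_comm]
    apply Finset.sum_subset (Finset.subset_univ _)
    intro z _ hz
    have : z = 0 := by
      by_contra h
      exact hz (Finset.mem_erase.mpr ⟨h, Finset.mem_univ z⟩)
    simp [this]
  have step2 : ∀ z ∈ univ.erase (0 : ZMod p),
      quadraticChar (ZMod p) (z * (z + c)) = quadraticChar (ZMod p) (1 + c * z⁻¹) := by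
    intro z hz
    have hz0 : z ≠ 0 := (Finset.mem_erase.mp hz).1
    have key : z * (z + c) = z ^ 2 * (1 + c * z⁻¹) := by
      field_simp
    rw [key, map_mul, quadraticChar_sq_one' hz0, one_mul]
  have step3 : ∑ z ∈ univ.erase (0 : ZMod p), quadraticChar (ZMod p) (1 + c * z⁻¹)
      = ∑ t ∈ univ.erase (1 : ZMod p), quadraticChar (ZMod p) t := by
    apply Finset.sum_nbij' (fun z => 1 + c * z⁻¹) (fun t => c * (t - 1)⁻¹)
    · intro z hz
      have hz0 : z ≠ 0 := (Finset.mem_erase.mp hz).1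
      refine Finset.mem_erase.mpr ⟨?_, Finset.mem_univ _⟩
      intro h
      have : c * z⁻¹ = 0 := by linear_combination h
      rcases mul_eq_zero.mp this with h' | h'
      · exact hc h'
      · exact hz0 (inv_eq_zero.mp h')
    · intro t ht
      have ht1 : t ≠ 1 := (Finset.mem_erase.mp ht).1
      refine Finset.mem_erase.mpr ⟨?_, Finset.mem_univ _⟩
      intro h
      rcases mul_eq_zero.mp h with h' | h'
      · exact hc h'
      · exact ht1 (by rwa [inv_eq_zero, sub_eq_zero] at h')
    · intro z hz
      have hz0 : z ≠ 0 := (Finset.mem_erase.mp hz).1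
      field_simp
      rw [add_sub_cancel_left, div_self hc]
    · intro t ht
      have ht1 : t ≠ 1 := (Finset.mem_erase.mp ht).1
      have : t - 1 ≠ 0 := sub_ne_zero.mpr ht1
      field_simp
      ring
    · intro z hz; rfl
  have step4 : ∑ t ∈ univ.erase (1 : ZMod p), quadraticChar (ZMod p) t = -1 := by
    have h := quadraticChar_sum_zero h2 (F := ZMod p)
    rw [← Finset.add_sum_erase _ _ (Finset.mem_univ (1 : ZMod p)), map_one] at h
    linarith
  rw [step1, Finset.sum_congr rfl step2, step3, step4]

lemma card_common (hmod : p % 4 = 1) {x y : ZMod p} (hxy : x ≠ y) :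
    4 * ((univ.filter fun z : ZMod p =>
        quadraticChar (ZMod p) (x - z) = 1 ∧ quadraticChar (ZMod p) (y - z) = 1).card : ℤ)
      = (p : ℤ) - 3 - 2 * quadraticChar (ZMod p) (x - y) := by
  classical
  set χ := quadraticChar (ZMod p) with hχ
  have hsum1 : ∀ a : ZMod p, ∑ z : ZMod p, (χ (a - z) : ℤ) = 0 := by
    intro a
    have : ∑ z : ZMod p, (χ (a - z) : ℤ) = ∑ t : ZMod p, (χ t : ℤ) :=
      Fintype.sum_equiv (Equiv.subLeft a) _ _ (fun z => rfl)
    rw [this]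
    exact_mod_cast quadraticChar_sum_zero (ringChar_ne_two' hmod)
  have hsum2 : ∑ z : ZMod p, (χ ((x - z) * (y - z)) : ℤ) = -1 := by
    have h1 : ∑ z : ZMod p, (χ ((x - z) * (y - z)) : ℤ)
        = ∑ w : ZMod p, (χ (w * (w + (y - x))) : ℤ) := by
      apply Fintype.sum_equiv (Equiv.subLeft x)
      intro z
      have : (x - z) * (y - z) = (x - z) * ((x - z) + (y - x)) := by ring
      rw [this]; rfl
    rw [h1]
    exact_mod_cast sum_chi_mul hmod (sub_ne_zero.mpr hxy.symm)
  have hT : ∑ z : ZMod p, ((1 + (χ (x - z) : ℤ)) * (1 + (χ (y - z) : ℤ))) = (p : ℤ) - 1 := by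
    have expand : ∀ z : ZMod p, (1 + (χ (x - z) : ℤ)) * (1 + (χ (y - z) : ℤ))
        = 1 + (χ (x - z) : ℤ) + (χ (y - z) : ℤ) + (χ ((x - z) * (y - z)) : ℤ) := by
      intro z; rw [map_mul]; ring
    rw [Finset.sum_congr rfl (fun z _ => expand z)]
    rw [Finset.sum_add_distrib, Finset.sum_add_distrib, Finset.sum_add_distrib,
      hsum1 x, hsum1 y, hsum2, Finset.sum_const, Finset.card_univ, ZMod.card]
    ring
  set A := univ.filter fun z : ZMod p => χ (x - z) = 1 ∧ χ (y - z) = 1 with hA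
  have hsplit : ∑ z : ZMod p, ((1 + (χ (x - z) : ℤ)) * (1 + (χ (y - z) : ℤ)))
      = ∑ z ∈ A, ((1 + (χ (x - z) : ℤ)) * (1 + (χ (y - z) : ℤ)))
      + ∑ z ∈ univ.filter (fun z => ¬(χ (x - z) = 1 ∧ χ (y - z) = 1)),
          ((1 + (χ (x - z) : ℤ)) * (1 + (χ (y - z) : ℤ))) :=
    (Finset.sum_filter_add_sum_filter_not _ _ _).symm
  have hon : ∑ z ∈ A, ((1 + (χ (x - z) : ℤ)) * (1 + (χ (y - z) : ℤ))) = 4 * A.card := by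
    rw [Finset.sum_congr rfl (g := fun _ => (4 : ℤ)) ?_, Finset.sum_const, nsmul_eq_mul]
    · ring
    · intro z hz
      obtain ⟨h1, h2⟩ := (Finset.mem_filter.mp hz).2
      rw [h1, h2]; norm_num
  have hoff : ∑ z ∈ univ.filter (fun z => ¬(χ (x - z) = 1 ∧ χ (y - z) = 1)),
      ((1 + (χ (x - z) : ℤ)) * (1 + (χ (y - z) : ℤ))) = 2 + 2 * χ (x - y) := by
    have hxmem : x ∈ univ.filter (fun z => ¬(χ (x - z) = 1 ∧ χ (y - z) = 1)) := by
      simp [hχ, quadraticChar_zero]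
    have hymem : y ∈ univ.filter (fun z => ¬(χ (x - z) = 1 ∧ χ (y - z) = 1)) := by
      simp [hχ, quadraticChar_zero]
    have hsub : {x, y} ⊆ univ.filter (fun z => ¬(χ (x - z) = 1 ∧ χ (y - z) = 1)) := by
      intro z hz
      rcases Finset.mem_insert.mp hz with rfl | hz
      · exact hxmem
      · rw [Finset.mem_singleton.mp hz]; exact hymem
    rw [← Finset.sum_subset hsub ?_]
    · rw [Finset.sum_pair hxy]
      have e1 : χ (x - x) = 0 := by rw [sub_self]; exact quadraticChar_zero
      have e2 : χ (y - y) = 0 := by rw [sub_self]; exact quadraticChar_zero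
      have e3 : χ (x - y) = χ (y - x) := by
        rw [← chi_neg hmod (y - x), neg_sub]
      rw [e1, e2, ← e3]
      push_cast; ring
    · intro z hz hznot
      have hzx : z ≠ x := by rintro rfl; exact hznot (Finset.mem_insert_self _ _)
      have hzy : z ≠ y := by
        rintro rfl
        exact hznot (Finset.mem_insert.mpr (Or.inr (Finset.mem_singleton_self _)))
      have hmem := (Finset.mem_filter.mp hz).2
      have hx0 : x - z ≠ 0 := sub_ne_zero.mpr (Ne.symm hzx)
      have hy0 : y - z ≠ 0 := sub_ne_zero.mpr (Ne.symm hzy)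
      rcases quadraticChar_dichotomy hx0 with h1 | h1
      · rcases quadraticChar_dichotomy hy0 with h2 | h2
        · exact absurd ⟨h1, h2⟩ hmem
        · rw [h2]; push_cast; ring
      · rw [h1]; push_cast; ring
  rw [hsplit, hon, hoff] at hT
  linarith

lemma card_filter_sub (x : ZMod p) :
    (univ.filter fun z : ZMod p => quadraticChar (ZMod p) (x - z) = 1).card
      = (univ.filter fun c : ZMod p => quadraticChar (ZMod p) c = 1).card := by
  apply Finset.card_nbij' (fun z => x - z) (fun c => x - c)
  · intro z hz; simpa using (Finset.mem_filter.mp hz).2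
  · intro c hc
    simp only [Finset.mem_coe, mem_filter, mem_univ, true_and, sub_sub_cancel]
    exact (Finset.mem_filter.mp hc).2
  · intro z _; simp
  · intro c _; simp

lemma chi_one_iff (c : ZMod p) :
    quadraticChar (ZMod p) c = 1 ↔ ∃ w : ZMod p, w ≠ 0 ∧ c = w ^ 2 := by
  constructor
  · intro h
    have hc : c ≠ 0 := by
      intro h0; rw [h0, quadraticChar_zero] at h; norm_num at h
    obtain ⟨w, hw⟩ := (quadraticChar_one_iff_isSquare hc).mp h
    refine ⟨w, ?_, by rw [hw, sq]⟩
    rintro rfl; rw [mul_zero] at hw; exact hc hw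
  · rintro ⟨w, hw, rfl⟩
    exact quadraticChar_sq_one' hw

lemma adj_iff (hmod : p % 4 = 1) (a b : ZMod p × Fin 2) :
    (paleyK2 p).Adj a b ↔
      quadraticChar (ZMod p) (a.1 - b.1) = 1 ∨ (a.1 = b.1 ∧ a.2 ≠ b.2) := by
  constructor
  · rintro (⟨h1, h2, h3⟩ | h)
    · exact Or.inl ((chi_one_iff _).mpr h2)
    · exact Or.inr h
  · rintro (h | h)
    · have hne : a.1 ≠ b.1 := by
        intro h0
        rw [h0, sub_self, quadraticChar_zero] at h; norm_num at h
      refine Or.inl ⟨hne, (chi_one_iff _).mp h, (chi_one_iff _).mp ?_⟩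
      rw [show b.1 - a.1 = -(a.1 - b.1) by ring, chi_neg hmod]; exact h
    · exact Or.inr h

lemma fin2_ne_iff (i w : Fin 2) : w ≠ i ↔ w = 1 - i := by
  revert i w; decide

lemma fin2_no_two (i j w : Fin 2) (h : i ≠ j) : ¬(i ≠ w ∧ j ≠ w) := by
  revert i j w; decide

end PaleyDezaAux

open Finset PaleyDezaAux in
theorem stmt14 (p : ℕ) (hp : p.Prime) (hmod : p % 4 = 1) :
    IsDezaGraph (paleyK2 p) (2 * p) p (p - 1) ((p - 1) / 2) := by
  haveI : Fact p.Prime := ⟨hp⟩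
  classical
  have hp5 : 5 ≤ p := by have := hp.two_le; omega
  have hc1 := card_chi_one hmod
  refine ⟨?_, ?_, ?_⟩
  · rw [Nat.card_eq_fintype_card, Fintype.card_prod, ZMod.card, Fintype.card_fin]
    ring
  · rintro ⟨x, i⟩
    have hset : (paleyK2 p).neighborSet (x, i) =
        ↑(((univ.filter fun z : ZMod p => quadraticChar (ZMod p) (x - z) = 1)
            ×ˢ (univ : Finset (Fin 2)))
          ∪ {((x, 1 - i) : ZMod p × Fin 2)}) := by
      ext ⟨z, w⟩
      simp only [SimpleGraph.mem_neighborSet, adj_iff hmod, Finset.coe_union,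
        Finset.coe_product, Finset.coe_singleton, Set.mem_union, Set.mem_prod,
        Finset.mem_coe, Finset.mem_filter, Finset.mem_univ, true_and, and_true,
        Set.mem_singleton_iff, Prod.mk.injEq]
      constructor
      · rintro (h | ⟨rfl, h⟩)
        · exact Or.inl h
        · exact Or.inr ⟨rfl, (fin2_ne_iff i w).mp (Ne.symm h)⟩
      · rintro (h | ⟨rfl, rfl⟩)
        · exact Or.inl h
        · exact Or.inr ⟨rfl, Ne.symm ((fin2_ne_iff i (1 - i)).mpr rfl)⟩
    rw [hset, Set.ncard_coe_finset, Finset.card_union_of_disjoint, Finset.card_product,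
      Finset.card_univ, Fintype.card_fin, Finset.card_singleton]
    · have hcs := card_filter_sub (p := p) x
      omega
    · rw [Finset.disjoint_singleton_right, Finset.mem_product, Finset.mem_filter]
      rintro ⟨⟨-, h⟩, -⟩
      rw [sub_self, quadraticChar_zero] at h
      norm_num at h
  · rintro ⟨x, i⟩ ⟨y, j⟩ huv
    by_cases hxy : x = y
    · subst hxy
      have hij : i ≠ j := fun h => huv (by rw [h])
      have hset : (paleyK2 p).commonNeighbors (x, i) (x, j) =
          ↑((univ.filter fun z : ZMod p => quadraticChar (ZMod p) (x - z) = 1)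
            ×ˢ (univ : Finset (Fin 2))) := by
        ext ⟨z, w⟩
        simp only [SimpleGraph.mem_commonNeighbors, adj_iff hmod, Finset.coe_product,
          Set.mem_prod, Finset.mem_coe, Finset.mem_filter, Finset.mem_univ, true_and,
          and_true]
        constructor
        · rintro ⟨h1 | ⟨rfl, h1⟩, h2 | ⟨heq2, h2⟩⟩
          · exact h1
          · exact h1
          · exact h2
          · exact absurd ⟨h1, h2⟩ (fin2_no_two i j w hij)
        · intro h
          exact ⟨Or.inl h, Or.inl h⟩
      rw [hset, Set.ncard_coe_finset, Finset.card_product, Finset.card_univ,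
        Fintype.card_fin]
      have hcs := card_filter_sub (p := p) x
      right; omega
    · have hN := card_common hmod hxy
      set χ := quadraticChar (ZMod p) with hχ
      set N := (univ.filter fun z : ZMod p => χ (x - z) = 1 ∧ χ (y - z) = 1).card with hNdef
      have hyx : ∀ c : ZMod p, χ (y - c) = χ (c - y) := by
        intro c; rw [← chi_neg hmod (c - y), neg_sub]
      have hchixy : χ (y - x) = χ (x - y) := by
        rw [← chi_neg hmod (x - y), neg_sub]
      by_cases hs : χ (x - y) = 1
      · have hN' : 4 * N = p - 5 := by
          rw [hs] at hN; omega
        have hset : (paleyK2 p).commonNeighbors (x, i) (y, j) =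
            ↑(((univ.filter fun z : ZMod p => χ (x - z) = 1 ∧ χ (y - z) = 1)
                ×ˢ (univ : Finset (Fin 2)))
              ∪ {((x, 1 - i) : ZMod p × Fin 2), (y, 1 - j)}) := by
          ext ⟨z, w⟩
          simp only [SimpleGraph.mem_commonNeighbors, adj_iff hmod, Finset.coe_union,
            Finset.coe_product, Set.mem_union, Set.mem_prod, Finset.mem_coe,
            Finset.mem_filter, Finset.mem_univ, true_and, and_true, Finset.coe_insert,
            Set.mem_insert_iff, Finset.coe_singleton, Set.mem_singleton_iff,
            Prod.mk.injEq]
          constructor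
          · rintro ⟨h1 | ⟨rfl, h1⟩, h2 | ⟨heq2, h2⟩⟩
            · exact Or.inl ⟨h1, h2⟩
            · exact Or.inr (Or.inr ⟨heq2.symm, (fin2_ne_iff j w).mp (Ne.symm h2)⟩)
            · exact Or.inr (Or.inl ⟨rfl, (fin2_ne_iff i w).mp (Ne.symm h1)⟩)
            · exact absurd heq2.symm hxy
          · rintro (⟨h1, h2⟩ | ⟨rfl, rfl⟩ | ⟨rfl, rfl⟩)
            · exact ⟨Or.inl h1, Or.inl h2⟩
            · refine ⟨Or.inr ⟨rfl, Ne.symm ((fin2_ne_iff i _).mpr rfl)⟩, Or.inl ?_⟩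
              rw [hchixy]; exact hs
            · refine ⟨Or.inl ?_, Or.inr ⟨rfl, Ne.symm ((fin2_ne_iff j _).mpr rfl)⟩⟩
              exact hs
        rw [hset, Set.ncard_coe_finset, Finset.card_union_of_disjoint,
          Finset.card_product, Finset.card_univ, Fintype.card_fin]
        · have hpair : ({((x, 1 - i) : ZMod p × Fin 2), (y, 1 - j)} : Finset _).card = 2 := by
            rw [Finset.card_insert_of_notMem, Finset.card_singleton]
            simp only [Finset.mem_singleton, Prod.mk.injEq, not_and]
            intro h; exact absurd h hxy
          rw [hpair]
          left; omega
        · rw [Finset.disjoint_right]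
          rintro ⟨a, b⟩ hab hmem
          rw [Finset.mem_product, Finset.mem_filter] at hmem
          obtain ⟨⟨-, h1, h2⟩, -⟩ := hmem
          rcases Finset.mem_insert.mp hab with h | h
          · rw [Prod.mk.injEq] at h
            rw [← h.1, sub_self, hχ, quadraticChar_zero] at h1
            norm_num at h1
          · rw [Finset.mem_singleton, Prod.mk.injEq] at h
            rw [← h.1, sub_self, hχ, quadraticChar_zero] at h2
            norm_num at h2
      · have hsneg : χ (x - y) = -1 :=
          (quadraticChar_eq_neg_one_iff_not_one (sub_ne_zero.mpr hxy)).mpr hs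
        have hN' : 4 * N = p - 1 := by
          rw [hsneg] at hN; omega
        have hset : (paleyK2 p).commonNeighbors (x, i) (y, j) =
            ↑((univ.filter fun z : ZMod p => χ (x - z) = 1 ∧ χ (y - z) = 1)
                ×ˢ (univ : Finset (Fin 2))) := by
          ext ⟨z, w⟩
          simp only [SimpleGraph.mem_commonNeighbors, adj_iff hmod, Finset.coe_product,
            Set.mem_prod, Finset.mem_coe, Finset.mem_filter, Finset.mem_univ, true_and,
            and_true]
          constructor
          · rintro ⟨h1 | ⟨rfl, h1⟩, h2 | ⟨heq2, h2⟩⟩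
            · exact ⟨h1, h2⟩
            · rw [← heq2] at h1
              exact absurd h1 hs
            · rw [hchixy] at h2
              exact absurd h2 hs
            · exact absurd heq2.symm hxy
          · rintro ⟨h1, h2⟩
            exact ⟨Or.inl h1, Or.inl h2⟩
        rw [hset, Set.ncard_coe_finset, Finset.card_product, Finset.card_univ,
          Fintype.card_fin]
        left; omega
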